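/- Let $f_n \in L^2([0,1]; \mathbb{R}^\kappa)$, $f \in L^2([0,1]; \mathbb{R}^\kappa)$ with $f_n \to f$ in $L^2$, and let $\varepsilon_n \to 0^+$. If $\liminf_{n\to\infty} \frac{1}{\varepsilon_n^2} \int_{\varepsilon_n}^1 \|f_n(t) - f_n(t - \varepsilon_n)\|^2 dt < \infty$, then $f \in H^1([0,1]; \mathbb{R}^\kappa)$ and $\liminf_{n\to\infty} \frac{1}{\varepsilon_n^2} \int_{\varepsilon_n}^1 \|f_n(t) - f_n(t - \varepsilon_n)\|^2 dt \geq \int_0^1 \|\nabla f(t)\|^2 dt$. -/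

import Mathlib

open Set Filter MeasureTheory
open scoped ENNReal NNReal

lemma tendsto_of_forall_inner {κ : ℕ} (w : ℕ → EuclideanSpace ℝ (Fin κ))
    (a : EuclideanSpace ℝ (Fin κ))
    (h : ∀ v, Tendsto (fun j => (inner ℝ v (w j) : ℝ)) atTop (nhds (inner ℝ v a))) :
    Tendsto w atTop (nhds a) := by
  have : Tendsto (fun j i => w j i) atTop (nhds (fun i => a i)) := by
    rw [tendsto_pi_nhds]
    intro i
    have := h (EuclideanSpace.single i (1:ℝ))
    simpa [EuclideanSpace.inner_single_left] using this
  have hc : Tendsto (fun j => (EuclideanSpace.equiv (Fin κ) ℝ).symm (fun i => w j i)) atTop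
      (nhds ((EuclideanSpace.equiv (Fin κ) ℝ).symm (fun i => a i))) :=
    ((EuclideanSpace.equiv (Fin κ) ℝ).symm.continuous.tendsto _).comp this
  simpa using hc

lemma exists_weak_limit {H : Type*} [NormedAddCommGroup H] [InnerProductSpace ℝ H]
    [CompleteSpace H] [SecondCountableTopology H] (C : ℝ) (G : ℕ → H)
    (hG : ∀ k, ‖G k‖ ≤ C) :
    ∃ (ψ : ℕ → ℕ) (g : H), StrictMono ψ ∧
      ∀ h : H, Tendsto (fun k => (inner ℝ (G (ψ k)) h : ℝ)) atTop (nhds (inner ℝ g h)) := by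
  have hC : 0 ≤ C := le_trans (norm_nonneg _) (hG 0)
  have : Nonempty H := ⟨0⟩
  set d : ℕ → H := TopologicalSpace.denseSeq H with hd
  have hdr : DenseRange d := TopologicalSpace.denseRange_denseSeq H
  -- diagonal extraction via compactness of a countable product of closed balls
  set K : Set (ℕ → ℝ) := Set.pi univ (fun m => Metric.closedBall (0:ℝ) (C * ‖d m‖)) with hK
  have hKc : IsCompact K := isCompact_univ_pi (fun m => isCompact_closedBall _ _)
  have hmem : ∀ k, (fun m => (inner ℝ (G k) (d m) : ℝ)) ∈ K := by
    intro k m _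
    rw [Metric.mem_closedBall, Real.dist_0_eq_abs]
    calc |(inner ℝ (G k) (d m) : ℝ)| ≤ ‖G k‖ * ‖d m‖ := abs_real_inner_le_norm _ _
      _ ≤ C * ‖d m‖ := mul_le_mul_of_nonneg_right (hG k) (norm_nonneg _)
  obtain ⟨a, -, ψ, hψ, ha⟩ := hKc.tendsto_subseq hmem
  have haev : ∀ m, Tendsto (fun k => (inner ℝ (G (ψ k)) (d m) : ℝ)) atTop (nhds (a m)) := by
    intro m
    have := tendsto_pi_nhds.1 ha m
    exact this
  -- for every h, the sequence of inner ℝ products is Cauchy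
  have hcauchy : ∀ h : H, ∃ l : ℝ,
      Tendsto (fun k => (inner ℝ (G (ψ k)) h : ℝ)) atTop (nhds l) := by
    intro h
    refine cauchySeq_tendsto_of_complete ?_
    rw [Metric.cauchySeq_iff]
    intro η hη
    obtain ⟨m, hm⟩ := Metric.denseRange_iff.1 hdr h (η / (3 * (C + 1)))
      (by positivity)
    have hkey : ∀ k, |(inner ℝ (G (ψ k)) h : ℝ) - inner ℝ (G (ψ k)) (d m)| ≤ η / 3 := by
      intro k
      have : (inner ℝ (G (ψ k)) h : ℝ) - inner ℝ (G (ψ k)) (d m)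
          = inner ℝ (G (ψ k)) (h - d m) := by rw [inner_sub_right]
      rw [this]
      calc |(inner ℝ (G (ψ k)) (h - d m) : ℝ)| ≤ ‖G (ψ k)‖ * ‖h - d m‖ :=
            abs_real_inner_le_norm _ _
        _ ≤ C * ‖h - d m‖ := mul_le_mul_of_nonneg_right (hG _) (norm_nonneg _)
        _ ≤ C * (η / (3 * (C + 1))) := by
            refine mul_le_mul_of_nonneg_left ?_ hC
            rw [← dist_eq_norm]
            exact le_of_lt hm
        _ ≤ η / 3 := by
            rw [div_mul_eq_div_div_swap]
            calc C * (η / (C+1) / 3) = (C / (C+1)) * (η/3) := by ring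
              _ ≤ 1 * (η/3) := by
                  refine mul_le_mul_of_nonneg_right ?_ (by positivity)
                  rw [div_le_one (by linarith)]; linarith
              _ = η/3 := one_mul _
    have hwC : CauchySeq (fun k => (inner ℝ (G (ψ k)) (d m) : ℝ)) := (haev m).cauchySeq
    rw [Metric.cauchySeq_iff] at hwC
    obtain ⟨N, hN⟩ := hwC (η / 3) (by positivity)
    refine ⟨N, fun p hp q hq => ?_⟩
    have h1 := hkey p
    have h2 := hkey q
    have h3 := hN p hp q hq
    rw [Real.dist_eq] at h3 ⊢
    set x1 := (inner ℝ (G (ψ p)) h : ℝ)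
    set x2 := (inner ℝ (G (ψ p)) (d m) : ℝ)
    set y1 := (inner ℝ (G (ψ q)) h : ℝ)
    set y2 := (inner ℝ (G (ψ q)) (d m) : ℝ)
    have t1 : |x1 - y1| ≤ |x1 - x2| + |x2 - y1| := abs_sub_le _ _ _
    have t2 : |x2 - y1| ≤ |x2 - y2| + |y2 - y1| := abs_sub_le _ _ _
    have h2' : |y2 - y1| ≤ η/3 := by rw [abs_sub_comm]; exact h2
    linarith
  choose T hT using hcauchy
  -- T is linear and bounded
  have Tadd : ∀ x y : H, T (x + y) = T x + T y := by
    intro x y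
    have h1 : Tendsto (fun k => (inner ℝ (G (ψ k)) (x + y) : ℝ)) atTop (nhds (T x + T y)) := by
      have := (hT x).add (hT y)
      simpa [inner_add_right] using this
    exact tendsto_nhds_unique (hT (x + y)) h1
  have Tsmul : ∀ (c : ℝ) (x : H), T (c • x) = c * T x := by
    intro c x
    have h1 : Tendsto (fun k => (inner ℝ (G (ψ k)) (c • x) : ℝ)) atTop (nhds (c * T x)) := by
      have := (hT x).const_mul c
      simpa [inner_smul_right] using this
    exact tendsto_nhds_unique (hT (c • x)) h1
  have Tbdd : ∀ x : H, ‖T x‖ ≤ C * ‖x‖ := by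
    intro x
    have : Tendsto (fun k => |(inner ℝ (G (ψ k)) x : ℝ)|) atTop (nhds |T x|) := (hT x).abs
    refine le_of_tendsto this (Eventually.of_forall fun k => ?_)
    calc |(inner ℝ (G (ψ k)) x : ℝ)| ≤ ‖G (ψ k)‖ * ‖x‖ := abs_real_inner_le_norm _ _
      _ ≤ C * ‖x‖ := mul_le_mul_of_nonneg_right (hG _) (norm_nonneg _)
  set Tlin : H →ₗ[ℝ] ℝ :=
    { toFun := T, map_add' := Tadd, map_smul' := Tsmul } with hTlin
  set Tclm : H →L[ℝ] ℝ := Tlin.mkContinuous C Tbdd with hTclm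
  refine ⟨ψ, (InnerProductSpace.toDual ℝ H).symm Tclm, hψ, fun h => ?_⟩
  have : (inner ℝ ((InnerProductSpace.toDual ℝ H).symm Tclm) h : ℝ) = Tclm h :=
    InnerProductSpace.toDual_symm_apply
  rw [this]
  exact hT h

lemma steklov_lintegral_le {κ : ℕ} (d : ℝ → EuclideanSpace ℝ (Fin κ))
    (hd : StronglyMeasurable d) {ε : ℝ} (hε : 0 < ε) :
    ∫⁻ x in Icc (0:ℝ) 1, ‖(ε⁻¹ : ℝ) • ∫ t in x..(x+ε), d t‖₊
      ≤ ∫⁻ t, ‖d t‖₊ := by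
  have hmeas : Measurable fun p : ℝ × ℝ =>
      (Ioc p.1 (p.1 + ε)).indicator (fun t => (‖d t‖₊ : ℝ≥0∞)) p.2 := by
    have : ∀ p : ℝ × ℝ, (Ioc p.1 (p.1 + ε)).indicator (fun t => (‖d t‖₊ : ℝ≥0∞)) p.2
        = Set.indicator {p : ℝ × ℝ | p.1 < p.2 ∧ p.2 ≤ p.1 + ε}
            (fun p => (‖d p.2‖₊ : ℝ≥0∞)) p := by
      intro p
      by_cases h : p.2 ∈ Ioc p.1 (p.1 + ε)
      · rw [Set.indicator_of_mem h, Set.indicator_of_mem]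
        exact ⟨h.1, h.2⟩
      · rw [Set.indicator_of_notMem h, Set.indicator_of_notMem]
        intro hc; exact h ⟨hc.1, hc.2⟩
    simp_rw [this]
    refine Measurable.indicator ?_ ?_
    · exact (measurable_enorm.comp (hd.measurable.comp measurable_snd))
    · exact MeasurableSet.inter
        (measurableSet_lt measurable_fst measurable_snd)
        (measurableSet_le measurable_snd (measurable_fst.add_const ε))
  calc ∫⁻ x in Icc (0:ℝ) 1, ‖(ε⁻¹ : ℝ) • ∫ t in x..(x+ε), d t‖₊
      ≤ ∫⁻ x in Icc (0:ℝ) 1, ENNReal.ofReal ε⁻¹ * ∫⁻ t in Ioc x (x+ε), ‖d t‖₊ := by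
        refine lintegral_mono fun x => ?_
        rw [nnnorm_smul]
        push_cast
        have h1 : (‖(ε⁻¹:ℝ)‖₊ : ℝ≥0∞) = ENNReal.ofReal ε⁻¹ := by
          rw [← enorm_eq_nnnorm, ← ofReal_norm, Real.norm_eq_abs,
            abs_of_pos (inv_pos.2 hε)]
        rw [h1]
        refine mul_le_mul_right ?_ _
        rw [intervalIntegral.integral_of_le (by linarith)]
        exact enorm_integral_le_lintegral_enorm _
    _ = ENNReal.ofReal ε⁻¹ * ∫⁻ x in Icc (0:ℝ) 1, ∫⁻ t,
          (Ioc x (x+ε)).indicator (fun t => (‖d t‖₊ : ℝ≥0∞)) t := by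
        rw [← lintegral_const_mul' _ _ (by simp)]
        refine setLIntegral_congr_fun measurableSet_Icc
          (fun x (_ : x ∈ Icc (0:ℝ) 1) => ?_)
        exact congrArg (ENNReal.ofReal ε⁻¹ * ·)
          (lintegral_indicator (μ := volume) (hs := measurableSet_Ioc)
            (f := fun t => (‖d t‖₊ : ℝ≥0∞))).symm
    _ = ENNReal.ofReal ε⁻¹ * ∫⁻ t, ∫⁻ x in Icc (0:ℝ) 1,
          (Ioc x (x+ε)).indicator (fun t => (‖d t‖₊ : ℝ≥0∞)) t := by
        congr 1
        exact lintegral_lintegral_swap (hmeas.aemeasurable)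
    _ ≤ ENNReal.ofReal ε⁻¹ * ∫⁻ t, (‖d t‖₊ : ℝ≥0∞) * ENNReal.ofReal ε := by
        refine mul_le_mul_right (lintegral_mono fun t => ?_) _
        have heq : ∀ x : ℝ, (Ioc x (x+ε)).indicator (fun t => (‖d t‖₊ : ℝ≥0∞)) t
            = (Ico (t-ε) t).indicator (fun _ => (‖d t‖₊ : ℝ≥0∞)) x := by
          intro x
          by_cases h : t ∈ Ioc x (x+ε)
          · rw [Set.indicator_of_mem h, Set.indicator_of_mem]
            exact ⟨by linarith [h.2], h.1⟩
          · rw [Set.indicator_of_notMem h, Set.indicator_of_notMem]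
            intro hc
            exact h ⟨hc.2, by linarith [hc.1]⟩
        simp_rw [heq]
        rw [lintegral_indicator_const measurableSet_Ico]
        rw [Measure.restrict_apply measurableSet_Ico]
        refine mul_le_mul_right ?_ _
        refine le_trans (measure_mono (inter_subset_left)) ?_
        rw [Real.volume_Ico]
        simp
    _ = ∫⁻ t, ‖d t‖₊ := by
        rw [lintegral_mul_const' _ _ (by simp)]
        rw [mul_comm (∫⁻ (a : ℝ), (‖d a‖₊ : ℝ≥0∞)), ← mul_assoc,
          ← ENNReal.ofReal_mul (le_of_lt (inv_pos.2 hε)),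
          inv_mul_cancel₀ (ne_of_gt hε)]
        simp

lemma toLp_norm_sq {κ : ℕ} (h : ℝ → EuclideanSpace ℝ (Fin κ))
    (hh : MemLp h 2 (volume.restrict (Icc (0:ℝ) 1))) :
    ‖hh.toLp h‖ ^ 2 = ∫ t in (0:ℝ)..1, ‖h t‖ ^ 2 := by
  have h1 : ‖hh.toLp h‖^2 = (inner ℝ (hh.toLp h) (hh.toLp h) : ℝ) :=
    (real_inner_self_eq_norm_sq _).symm
  rw [h1, L2.inner_def]
  have h2 : ∫ a, (inner ℝ ((hh.toLp h) a) ((hh.toLp h) a) : ℝ)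
        ∂(volume.restrict (Icc (0:ℝ) 1))
      = ∫ a, ‖h a‖^2 ∂(volume.restrict (Icc (0:ℝ) 1)) := by
    refine integral_congr_ae ?_
    filter_upwards [hh.coeFn_toLp] with a ha
    rw [ha, real_inner_self_eq_norm_sq]
  rw [h2, show (volume.restrict (Icc (0:ℝ) 1)) = volume.restrict (Ioc 0 1) from
    (Measure.restrict_congr_set Ioc_ae_eq_Icc).symm,
    intervalIntegral.integral_of_le zero_le_one]

set_option maxHeartbeats 1000000 in
set_option synthInstance.maxHeartbeats 400000 in
theorem finite_difference_H1_liminf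
    (κ : ℕ) (f : ℝ → EuclideanSpace ℝ (Fin κ)) (fn : ℕ → ℝ → EuclideanSpace ℝ (Fin κ))
    (hfL2 : MemLp f 2 (volume.restrict (Icc (0:ℝ) 1)))
    (hfnL2 : ∀ n, MemLp (fn n) 2 (volume.restrict (Icc (0:ℝ) 1)))
    (hconv : Tendsto (fun n => ∫ t in (0:ℝ)..1, ‖fn n t - f t‖ ^ 2) atTop (nhds 0))
    (ε : ℕ → ℝ) (hεpos : ∀ n, 0 < ε n) (hε : Tendsto ε atTop (nhds 0))
    (hfin : ∃ A : ℝ, ∃ᶠ n in atTop,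
      (1 / (ε n) ^ 2) * ∫ t in (ε n)..1, ‖fn n t - fn n (t - ε n)‖ ^ 2 ≤ A) :
    ∃ (F g' : ℝ → EuclideanSpace ℝ (Fin κ)),
      (∀ᵐ t ∂MeasureTheory.volume, t ∈ Icc (0:ℝ) 1 → f t = F t) ∧
      MemLp g' 2 (volume.restrict (Icc (0:ℝ) 1)) ∧
      (∀ s ∈ Icc (0:ℝ) 1, ∀ t ∈ Icc (0:ℝ) 1, F t - F s = ∫ u in s..t, g' u) ∧
      (∫ t in (0:ℝ)..1, ‖g' t‖ ^ 2) ≤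
        Filter.liminf (fun n =>
          (1 / (ε n) ^ 2) * ∫ t in (ε n)..1, ‖fn n t - fn n (t - ε n)‖ ^ 2) atTop := by
  classical
  set μ : Measure ℝ := volume.restrict (Icc (0:ℝ) 1) with hμdef
  haveI : IsFiniteMeasure μ := by
    constructor
    rw [hμdef, Measure.restrict_apply_univ, Real.volume_Icc]
    norm_num
  set D : ℕ → ℝ := fun n =>
    (1 / (ε n) ^ 2) * ∫ t in (ε n)..1, ‖fn n t - fn n (t - ε n)‖ ^ 2 with hDdef
  set L : ℝ := liminf D atTop with hLdef
  obtain ⟨A, hA⟩ := hfin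
  -- measurable representatives
  obtain ⟨f', hf'sm, hf'ae⟩ : ∃ f', StronglyMeasurable f' ∧ f =ᵐ[μ] f' :=
    ⟨hfL2.1.mk f, hfL2.1.stronglyMeasurable_mk, hfL2.1.ae_eq_mk⟩
  have hfn'ex : ∀ n, ∃ g, StronglyMeasurable g ∧ fn n =ᵐ[μ] g := fun n =>
    ⟨(hfnL2 n).1.mk (fn n), (hfnL2 n).1.stronglyMeasurable_mk, (hfnL2 n).1.ae_eq_mk⟩
  choose fn' hfn'sm hfn'ae using hfn'ex
  set fbar : ℝ → EuclideanSpace ℝ (Fin κ) := (Icc (0:ℝ) 1).indicator f' with hfbardef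
  set fnb : ℕ → ℝ → EuclideanSpace ℝ (Fin κ) :=
    fun n => (Icc (0:ℝ) 1).indicator (fn' n) with hfnbdef
  have hfbar_sm : StronglyMeasurable fbar := hf'sm.indicator measurableSet_Icc
  have hfnb_sm : ∀ n, StronglyMeasurable (fnb n) :=
    fun n => (hfn'sm n).indicator measurableSet_Icc
  have hf'L2 : MemLp f' 2 μ := hfL2.ae_eq hf'ae
  have hfn'L2 : ∀ n, MemLp (fn' n) 2 μ := fun n => (hfnL2 n).ae_eq (hfn'ae n)
  have hfbar_L2v : MemLp fbar 2 volume := by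
    refine ⟨hfbar_sm.aestronglyMeasurable, ?_⟩
    rw [hfbardef, eLpNorm_indicator_eq_eLpNorm_restrict measurableSet_Icc]
    exact hf'L2.2
  have hfnb_L2v : ∀ n, MemLp (fnb n) 2 volume := by
    intro n
    refine ⟨(hfnb_sm n).aestronglyMeasurable, ?_⟩
    rw [hfnbdef, eLpNorm_indicator_eq_eLpNorm_restrict measurableSet_Icc]
    exact (hfn'L2 n).2
  have hfbar_int : Integrable fbar volume := by
    refine IntegrableOn.integrable_indicator ?_ measurableSet_Icc
    exact hf'L2.integrable one_le_two
  have hfnb_int : ∀ n, Integrable (fnb n) volume := by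
    intro n
    refine IntegrableOn.integrable_indicator ?_ measurableSet_Icc
    exact (hfn'L2 n).integrable one_le_two
  have hae_fb : ∀ᵐ t ∂volume, t ∈ Icc (0:ℝ) 1 → fbar t = f t := by
    refine ae_imp_of_ae_restrict ?_
    filter_upwards [hf'ae, ae_restrict_mem measurableSet_Icc] with t h1 h2
    rw [hfbardef, Set.indicator_of_mem h2, h1]
  have hae_fnb : ∀ n, ∀ᵐ t ∂volume, t ∈ Icc (0:ℝ) 1 → fnb n t = fn n t := by
    intro n
    refine ae_imp_of_ae_restrict ?_
    filter_upwards [hfn'ae n, ae_restrict_mem measurableSet_Icc] with t h1 h2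
    show (Icc (0:ℝ) 1).indicator (fn' n) t = fn n t
    rw [Set.indicator_of_mem h2, h1]
  -- L¹ convergence of fnb to fbar (globally)
  have hμuniv : μ univ = 1 := by
    rw [hμdef, Measure.restrict_apply_univ, Real.volume_Icc]; norm_num
  have hIn0 : ∀ n, 0 ≤ ∫ t in (0:ℝ)..1, ‖fn n t - f t‖ ^ 2 := by
    intro n
    refine intervalIntegral.integral_nonneg zero_le_one ?_
    intro u _; positivity
  have hsq : ∀ n, eLpNorm (fun t => fn n t - f t) 2 μ
      = ENNReal.ofReal (Real.sqrt (∫ t in (0:ℝ)..1, ‖fn n t - f t‖ ^ 2)) := by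
    intro n
    have hd : MemLp (fun t => fn n t - f t) 2 μ := (hfnL2 n).sub hfL2
    have hint2 : Integrable (fun t => ‖fn n t - f t‖ ^ 2) μ := by
      have h := hd.integrable_norm_rpow (by norm_num) (by norm_num)
      refine h.congr (Eventually.of_forall fun t => ?_)
      show ‖fn n t - f t‖ ^ ((2:ℝ≥0∞).toReal) = ‖fn n t - f t‖ ^ (2:ℕ)
      rw [ENNReal.toReal_ofNat, show ((2:ℝ)) = ((2:ℕ):ℝ) by norm_num, Real.rpow_natCast]
    have hIio : (∫ t in (0:ℝ)..1, ‖fn n t - f t‖ ^ 2)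
        = ∫ t, ‖fn n t - f t‖ ^ 2 ∂μ := by
      rw [intervalIntegral.integral_of_le zero_le_one,
        Measure.restrict_congr_set (Ioc_ae_eq_Icc (a := (0:ℝ)) (b := (1:ℝ)) (μ := volume))]
    have h1 : ENNReal.ofReal (∫ t, ‖fn n t - f t‖ ^ 2 ∂μ)
        = ∫⁻ t, ENNReal.ofReal (‖fn n t - f t‖ ^ 2) ∂μ :=
      ofReal_integral_eq_lintegral_ofReal hint2 (Eventually.of_forall fun t => by positivity)
    have h2 : ∀ t : ℝ, ENNReal.ofReal (‖fn n t - f t‖ ^ 2)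
        = (‖fn n t - f t‖₊ : ℝ≥0∞) ^ (2:ℝ) := by
      intro t
      rw [ENNReal.ofReal_pow (norm_nonneg _), ofReal_norm, enorm_eq_nnnorm,
        show ((2:ℝ)) = ((2:ℕ):ℝ) by norm_num, ENNReal.rpow_natCast]
    have h3 : ∫⁻ t, (‖fn n t - f t‖₊ : ℝ≥0∞) ^ (2:ℝ) ∂μ
        = ENNReal.ofReal (∫ t in (0:ℝ)..1, ‖fn n t - f t‖ ^ 2) := by
      rw [hIio, h1]
      exact lintegral_congr fun t => (h2 t).symm
    rw [eLpNorm_eq_lintegral_rpow_enorm_toReal (by norm_num) (by norm_num), ENNReal.toReal_ofNat]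
    simp_rw [enorm_eq_nnnorm]
    rw [h3, Real.sqrt_eq_rpow, ← ENNReal.ofReal_rpow_of_nonneg (hIn0 n) (by norm_num)]
  have hL2conv : Tendsto (fun n => eLpNorm (fun t => fn n t - f t) 2 μ) atTop (nhds 0) := by
    simp_rw [hsq]
    have h1 : Tendsto (fun n => Real.sqrt (∫ t in (0:ℝ)..1, ‖fn n t - f t‖ ^ 2))
        atTop (nhds 0) := by
      have := (Real.continuous_sqrt.tendsto 0).comp hconv
      simpa [Function.comp_def] using this
    have := ENNReal.tendsto_ofReal h1
    simpa using this
  have hchain : ∀ n, (∫⁻ t, ‖fnb n t - fbar t‖₊ ∂volume)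
      ≤ eLpNorm (fun t => fn n t - f t) 2 μ := by
    intro n
    have e2 : (fun t => fnb n t - fbar t)
        = (Icc (0:ℝ) 1).indicator (fun t => fn' n t - f' t) := by
      funext t
      by_cases h : t ∈ Icc (0:ℝ) 1
      · simp [hfnbdef, hfbardef, Set.indicator_of_mem h]
      · simp [hfnbdef, hfbardef, Set.indicator_of_notMem h]
    have e4 : eLpNorm (fun t => fn' n t - f' t) 1 μ
        ≤ eLpNorm (fun t => fn' n t - f' t) 2 μ := by
      have h := eLpNorm_le_eLpNorm_mul_rpow_measure_univ (p := 1) (q := 2) (μ := μ)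
        (by norm_num) (((hfn'sm n).sub hf'sm).aestronglyMeasurable)
      rwa [hμuniv, ENNReal.one_rpow, mul_one] at h
    have e5 : eLpNorm (fun t => fn' n t - f' t) 2 μ
        = eLpNorm (fun t => fn n t - f t) 2 μ :=
      eLpNorm_congr_ae (((hfn'ae n).sub hf'ae).symm)
    calc (∫⁻ t, ‖fnb n t - fbar t‖₊ ∂volume)
        = eLpNorm (fun t => fnb n t - fbar t) 1 volume :=
          (eLpNorm_one_eq_lintegral_enorm (f := fun t => fnb n t - fbar t) (μ := volume)).symm
      _ = eLpNorm (fun t => fn' n t - f' t) 1 μ := by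
          rw [e2, eLpNorm_indicator_eq_eLpNorm_restrict measurableSet_Icc]
      _ ≤ eLpNorm (fun t => fn' n t - f' t) 2 μ := e4
      _ = eLpNorm (fun t => fn n t - f t) 2 μ := e5
  have hΛ : Tendsto (fun n => ∫⁻ t, ‖fnb n t - fbar t‖₊ ∂volume) atTop (nhds 0) := by
    exact tendsto_of_tendsto_of_tendsto_of_le_of_le tendsto_const_nhds hL2conv
      (fun n => zero_le) hchain
  -- liminf basics
  have hev1 : ∀ᶠ n in atTop, ε n < 1/2 := by
    exact hε.eventually_lt_const (by norm_num)
  have hev0 : ∀ᶠ n in atTop, 0 ≤ D n := by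
    filter_upwards [hev1] with n hn
    refine mul_nonneg (by positivity) ?_
    refine intervalIntegral.integral_nonneg (by linarith [hεpos n]) ?_
    intro u _
    positivity
  have hbdd : IsBoundedUnder (· ≥ ·) atTop D := ⟨0, by
    rw [eventually_map]; exact hev0⟩
  have hcob : IsCoboundedUnder (· ≥ ·) atTop D := by
    exact Filter.IsCoboundedUnder.of_frequently_le hA
  have hL0 : 0 ≤ L := le_liminf_of_le hcob hev0
  have hfreq : ∀ j : ℕ, ∃ᶠ n in atTop,
      (D n < L + 1/(j+1) ∧ L - 1/(j+1) < D n ∧ ε n < 1/2) := by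
    intro j
    have hp : (0:ℝ) < 1/(j+1) := by positivity
    have h1 : ∃ᶠ n in atTop, D n < L + 1/(j+1) :=
      frequently_lt_of_liminf_lt hcob (lt_add_of_pos_right L hp)
    have h2 : ∀ᶠ n in atTop, L - 1/(j+1) < D n :=
      eventually_lt_of_lt_liminf (sub_lt_self L hp) hbdd
    exact h1.and_eventually (h2.and hev1)
  obtain ⟨φ₀, hφ₀m, hφ₀⟩ := Filter.extraction_forall_of_frequently hfreq
  have hDφ : Tendsto (D ∘ φ₀) atTop (nhds L) := by
    have h0 : Tendsto (fun j : ℕ => 1/((j:ℝ)+1)) atTop (nhds 0) :=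
      tendsto_one_div_add_atTop_nhds_zero_nat
    have hb : Tendsto (fun j : ℕ => L - 1/((j:ℝ)+1)) atTop (nhds L) := by
      simpa using tendsto_const_nhds.sub h0
    have hc : Tendsto (fun j : ℕ => L + 1/((j:ℝ)+1)) atTop (nhds L) := by
      simpa using tendsto_const_nhds.add h0
    refine tendsto_of_tendsto_of_tendsto_of_le_of_le hb hc ?_ ?_
    · exact fun j => le_of_lt (hφ₀ j).2.1
    · exact fun j => le_of_lt (hφ₀ j).1
  set εj : ℕ → ℝ := fun j => ε (φ₀ j) with hεjdef
  have hεjpos : ∀ j, 0 < εj j := fun j => hεpos _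
  have hεjlt : ∀ j, εj j < 1/2 := fun j => (hφ₀ j).2.2
  have hεj0 : Tendsto εj atTop (nhds 0) := hε.comp hφ₀m.tendsto_atTop
  -- difference quotients
  set gk : ℕ → ℝ → EuclideanSpace ℝ (Fin κ) := fun j t =>
    if t ∈ Icc (0:ℝ) (1 - εj j)
    then (εj j)⁻¹ • (fnb (φ₀ j) (t + εj j) - fnb (φ₀ j) t) else 0 with hgkdef
  have hgksm : ∀ j, StronglyMeasurable (gk j) := by
    intro j
    have h1 : StronglyMeasurable
        (fun t => (εj j)⁻¹ • (fnb (φ₀ j) (t + εj j) - fnb (φ₀ j) t)) :=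
      (((hfnb_sm (φ₀ j)).comp_measurable (measurable_add_const (εj j))).sub (hfnb_sm (φ₀ j))).const_smul (εj j)⁻¹
    exact StronglyMeasurable.ite measurableSet_Icc h1 stronglyMeasurable_const
  have hgkv : ∀ j, MemLp (gk j) 2 volume := by
    intro j
    have h1 : MemLp (fun t => fnb (φ₀ j) (t + εj j)) 2 volume :=
      (hfnb_L2v _).comp_measurePreserving (measurePreserving_add_right volume (εj j))
    have h2 : MemLp (fun t => (εj j)⁻¹ • (fnb (φ₀ j) (t + εj j) - fnb (φ₀ j) t)) 2 volume :=
      (h1.sub (hfnb_L2v (φ₀ j))).const_smul (εj j)⁻¹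
    have h3 : gk j = (Icc (0:ℝ) (1 - εj j)).indicator
        (fun t => (εj j)⁻¹ • (fnb (φ₀ j) (t + εj j) - fnb (φ₀ j) t)) := by
      funext t
      simp [hgkdef, Set.indicator_apply]
    rw [h3]
    exact h2.indicator measurableSet_Icc
  have hgkmem : ∀ j, MemLp (gk j) 2 μ := by
    intro j
    rw [hμdef]
    exact (hgkv j).restrict _
  have hgksq_int : ∀ j, Integrable (fun t => ‖gk j t‖ ^ 2) volume := by
    intro j
    have h := (hgkv j).integrable_norm_rpow (by norm_num) (by norm_num)
    refine h.congr (Eventually.of_forall fun t => ?_)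
    show ‖gk j t‖ ^ ((2:ℝ≥0∞).toReal) = ‖gk j t‖ ^ (2:ℕ)
    rw [ENNReal.toReal_ofNat, show ((2:ℝ)) = ((2:ℕ):ℝ) by norm_num, Real.rpow_natCast]
  set Gj : ℕ → Lp (EuclideanSpace ℝ (Fin κ)) 2 μ := fun j => (hgkmem j).toLp _ with hGjdef
  have hGnorm : ∀ j, ‖Gj j‖^2 = D (φ₀ j) := by
    intro j
    have hej : 0 < εj j := hεjpos j
    have hejlt : εj j < 1/2 := hεjlt j
    have hej1 : εj j ≤ 1 := by linarith
    have hII : ∀ a b : ℝ, IntervalIntegrable (fun t => ‖gk j t‖^2) volume a b :=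
      fun a b => (hgksq_int j).intervalIntegrable
    have hstep1 : ‖Gj j‖^2 = ∫ t in (0:ℝ)..1, ‖gk j t‖^2 := toLp_norm_sq (gk j) (hgkmem j)
    have hsplit : (∫ t in (0:ℝ)..(1 - εj j), ‖gk j t‖^2)
          + (∫ t in (1 - εj j)..1, ‖gk j t‖^2)
        = ∫ t in (0:ℝ)..1, ‖gk j t‖^2 :=
      intervalIntegral.integral_add_adjacent_intervals (hII _ _) (hII _ _)
    have hzero : (∫ t in (1 - εj j)..1, ‖gk j t‖^2) = 0 := by
      have heq0 : (∫ t in (1 - εj j)..1, ‖gk j t‖^2) = ∫ t in (1 - εj j)..1, (0:ℝ) := by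
        refine intervalIntegral.integral_congr_ae ?_
        refine Eventually.of_forall fun t ht => ?_
        rw [uIoc_of_le (by linarith)] at ht
        have hne : t ∉ Icc (0:ℝ) (1 - εj j) := by
          intro hc
          linarith [ht.1, hc.2]
        have h0 : gk j t = 0 := by
          simp only [hgkdef]
          rw [if_neg hne]
        rw [h0, norm_zero]
        norm_num
      rw [heq0, intervalIntegral.integral_zero]
    have hmain1 : (∫ t in (0:ℝ)..(1 - εj j), ‖gk j t‖^2)
        = ((εj j)⁻¹)^2
          * ∫ t in (0:ℝ)..(1 - εj j), ‖fnb (φ₀ j) (t + εj j) - fnb (φ₀ j) t‖^2 := by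
      rw [← intervalIntegral.integral_const_mul]
      refine intervalIntegral.integral_congr fun t ht => ?_
      rw [uIcc_of_le (by linarith)] at ht
      have hgt : gk j t = (εj j)⁻¹ • (fnb (φ₀ j) (t + εj j) - fnb (φ₀ j) t) := by
        simp only [hgkdef]
        rw [if_pos ht]
      show ‖gk j t‖^2 = ((εj j)⁻¹)^2 * ‖fnb (φ₀ j) (t + εj j) - fnb (φ₀ j) t‖^2
      rw [hgt, norm_smul, mul_pow, Real.norm_eq_abs, abs_of_pos (inv_pos.2 hej)]
    have hcov : (∫ t in (0:ℝ)..(1 - εj j), ‖fnb (φ₀ j) (t + εj j) - fnb (φ₀ j) t‖^2)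
        = ∫ t in (εj j)..1, ‖fnb (φ₀ j) t - fnb (φ₀ j) (t - εj j)‖^2 := by
      have h := intervalIntegral.integral_comp_sub_right
        (a := εj j) (b := 1)
        (fun u => ‖fnb (φ₀ j) (u + εj j) - fnb (φ₀ j) u‖^2) (εj j)
      simp only [sub_add_cancel, sub_self] at h
      exact h.symm
    have hcongr : (∫ t in (εj j)..1, ‖fnb (φ₀ j) t - fnb (φ₀ j) (t - εj j)‖^2)
        = ∫ t in (εj j)..1, ‖fn (φ₀ j) t - fn (φ₀ j) (t - εj j)‖^2 := by
      refine intervalIntegral.integral_congr_ae ?_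
      have hv1 := hae_fnb (φ₀ j)
      have hv2 : ∀ᵐ t ∂(volume : Measure ℝ),
          (t - εj j) ∈ Icc (0:ℝ) 1 → fnb (φ₀ j) (t - εj j) = fn (φ₀ j) (t - εj j) :=
        (measurePreserving_sub_right volume (εj j)).quasiMeasurePreserving.ae hv1
      filter_upwards [hv1, hv2] with t h1 h2 ht
      rw [uIoc_of_le (by linarith : εj j ≤ 1)] at ht
      rw [h1 ⟨by linarith [ht.1], ht.2⟩,
        h2 ⟨by linarith [ht.1], by linarith [ht.2]⟩]
    have hD : D (φ₀ j) = 1/((εj j)^2)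
        * ∫ t in (εj j)..1, ‖fn (φ₀ j) t - fn (φ₀ j) (t - εj j)‖^2 := rfl
    rw [hstep1, ← hsplit, hzero, add_zero, hmain1, hcov, hcongr, hD, one_div, inv_pow]
  have hGbdd : ∃ C, ∀ j, ‖Gj j‖ ≤ C := by
    obtain ⟨M, hM⟩ := hDφ.bddAbove_range
    refine ⟨Real.sqrt M, fun j => ?_⟩
    have h1 : ‖Gj j‖ = Real.sqrt (D (φ₀ j)) := by
      rw [← hGnorm j, Real.sqrt_sq (norm_nonneg _)]
    rw [h1]
    exact Real.sqrt_le_sqrt (hM ⟨j, rfl⟩)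
  obtain ⟨C, hC⟩ := hGbdd
  haveI : Fact ((2:ℝ≥0∞) ≠ ∞) := ⟨by norm_num⟩
  haveI hsep : MeasureTheory.IsSeparable μ := by infer_instance
  haveI : SecondCountableTopology (Lp (EuclideanSpace ℝ (Fin κ)) 2 μ) :=
    MeasureTheory.Lp.SecondCountableTopology
  obtain ⟨ψ₁, G, hψ₁m, hweak⟩ := exists_weak_limit C Gj hC
  set g' : ℝ → EuclideanSpace ℝ (Fin κ) := ⇑G with hg'def
  have hg'mem : MemLp g' 2 μ := Lp.memLp G
  have hii : ∀ a b : ℝ, a ∈ Icc (0:ℝ) 1 → b ∈ Icc (0:ℝ) 1 →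
      IntervalIntegrable g' volume a b := by
    intro a b ha hb
    rw [intervalIntegrable_iff]
    have hon : IntegrableOn g' (Icc (0:ℝ) 1) volume := hg'mem.integrable one_le_two
    refine hon.mono_set ?_
    intro x hx
    rcases hx with ⟨hx1, hx2⟩
    constructor
    · calc (0:ℝ) ≤ min a b := le_min ha.1 hb.1
        _ ≤ x := le_of_lt hx1
    · calc x ≤ max a b := hx2
        _ ≤ 1 := max_le ha.2 hb.2
  have hA2 : ∀ s t : ℝ, 0 ≤ s → s ≤ t → t ≤ 1 →
      Tendsto (fun k => ∫ u in s..t, gk (ψ₁ k) u) atTop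
        (nhds (∫ u in s..t, g' u)) := by
    intro s t hs hst ht1
    have hsub : Ioc s t ⊆ Icc (0:ℝ) 1 := fun x hx =>
      ⟨by linarith [hx.1], by linarith [hx.2]⟩
    have hIocm : MeasurableSet (Ioc s t) := measurableSet_Ioc
    have hμIoc : μ (Ioc s t) ≠ ⊤ :=
      ne_of_lt (lt_of_le_of_lt (measure_mono (subset_univ _)) (by rw [hμuniv]; norm_num))
    have hrr : μ.restrict (Ioc s t) = volume.restrict (Ioc s t) := by
      rw [hμdef, Measure.restrict_restrict hIocm, inter_eq_self_of_subset_left hsub]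
    have key : ∀ (H : Lp (EuclideanSpace ℝ (Fin κ)) 2 μ) (v : EuclideanSpace ℝ (Fin κ)),
        (inner ℝ (indicatorConstLp 2 hIocm hμIoc v) H : ℝ)
          = inner ℝ v (∫ u in s..t, H u) := by
      intro H v
      rw [L2.inner_indicatorConstLp_eq_setIntegral_inner]
      have hint : Integrable (⇑H) μ := (Lp.memLp H).integrable one_le_two
      have hint2 : Integrable (⇑H) (volume.restrict (Ioc s t)) := hrr ▸ hint.restrict
      have h2 : ∫ x in Ioc s t, (inner ℝ v (H x) : ℝ) ∂μ
          = ∫ x in Ioc s t, (inner ℝ v (H x) : ℝ) ∂volume := by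
        show ∫ x, _ ∂(μ.restrict (Ioc s t)) = ∫ x, _ ∂(volume.restrict (Ioc s t))
        rw [hrr]
      rw [h2, intervalIntegral.integral_of_le hst]
      exact integral_inner hint2 v
    refine tendsto_of_forall_inner _ _ (fun v => ?_)
    have h1 := hweak (indicatorConstLp 2 hIocm hμIoc v)
    have h2 : (inner ℝ G (indicatorConstLp 2 hIocm hμIoc v) : ℝ)
        = inner ℝ v (∫ u in s..t, g' u) := by
      rw [real_inner_comm, key G v]
    have h3 : Tendsto (fun k => (inner ℝ v (∫ u in s..t, gk (ψ₁ k) u) : ℝ)) atTop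
        (nhds (inner ℝ G (indicatorConstLp 2 hIocm hμIoc v))) := by
      refine h1.congr fun k => ?_
      have hae' : ∀ᵐ u ∂(volume : Measure ℝ), u ∈ uIoc s t →
          (Gj (ψ₁ k)) u = gk (ψ₁ k) u := by
        have h := (hgkmem (ψ₁ k)).coeFn_toLp
        have h4 := ae_imp_of_ae_restrict (μ := volume) (s := Icc (0:ℝ) 1) h
        filter_upwards [h4] with u hu huIoc
        have hmem : u ∈ Icc (0:ℝ) 1 := by
          rw [uIoc_of_le hst] at huIoc
          exact hsub huIoc
        exact hu hmem
      rw [real_inner_comm, key (Gj (ψ₁ k)) v,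
        intervalIntegral.integral_congr_ae hae']
    rw [h2] at h3
    exact h3
  -- Steklov averages
  set SF : ℕ → ℝ → EuclideanSpace ℝ (Fin κ) := fun k x =>
    (εj (ψ₁ k))⁻¹ • ∫ t in x..(x + εj (ψ₁ k)), fnb (φ₀ (ψ₁ k)) t with hSFdef
  set Sf : ℕ → ℝ → EuclideanSpace ℝ (Fin κ) := fun k x =>
    (εj (ψ₁ k))⁻¹ • ∫ t in x..(x + εj (ψ₁ k)), fbar t with hSfdef
  have hSFc : ∀ k, Continuous (SF k) := by
    intro k
    have hP : Continuous (fun b => ∫ t in (0:ℝ)..b, fnb (φ₀ (ψ₁ k)) t) :=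
      intervalIntegral.continuous_primitive
        (fun a b => (hfnb_int _).intervalIntegrable) 0
    have heq : SF k = fun x => (εj (ψ₁ k))⁻¹ •
        ((∫ t in (0:ℝ)..(x + εj (ψ₁ k)), fnb (φ₀ (ψ₁ k)) t)
          - ∫ t in (0:ℝ)..x, fnb (φ₀ (ψ₁ k)) t) := by
      funext x
      rw [hSFdef]
      congr 1
      rw [intervalIntegral.integral_interval_sub_left
        ((hfnb_int _).intervalIntegrable) ((hfnb_int _).intervalIntegrable)]
    rw [heq]
    exact ((hP.comp (continuous_add_right (εj (ψ₁ k)))).sub hP).const_smul (εj (ψ₁ k))⁻¹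
  have hSfc : ∀ k, Continuous (Sf k) := by
    intro k
    have hP : Continuous (fun b => ∫ t in (0:ℝ)..b, fbar t) :=
      intervalIntegral.continuous_primitive
        (fun a b => hfbar_int.intervalIntegrable) 0
    have heq : Sf k = fun x => (εj (ψ₁ k))⁻¹ •
        ((∫ t in (0:ℝ)..(x + εj (ψ₁ k)), fbar t) - ∫ t in (0:ℝ)..x, fbar t) := by
      funext x
      rw [hSfdef]
      congr 1
      rw [intervalIntegral.integral_interval_sub_left
        (hfbar_int.intervalIntegrable) (hfbar_int.intervalIntegrable)]
    rw [heq]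
    exact ((hP.comp (continuous_add_right (εj (ψ₁ k)))).sub hP).const_smul (εj (ψ₁ k))⁻¹
  have hT0 : Tendsto (fun k => ∫⁻ x in Icc (0:ℝ) 1, ‖SF k x - Sf k x‖₊ ∂volume)
      atTop (nhds 0) := by
    have hbound : ∀ k, (∫⁻ x in Icc (0:ℝ) 1, ‖SF k x - Sf k x‖₊ ∂volume)
        ≤ ∫⁻ t, ‖fnb (φ₀ (ψ₁ k)) t - fbar t‖₊ ∂volume := by
      intro k
      have hdm : StronglyMeasurable (fun t => fnb (φ₀ (ψ₁ k)) t - fbar t) :=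
        (hfnb_sm _).sub hfbar_sm
      have h := steklov_lintegral_le (fun t => fnb (φ₀ (ψ₁ k)) t - fbar t) hdm
        (hεjpos (ψ₁ k))
      refine le_trans (le_of_eq ?_) h
      refine setLIntegral_congr_fun measurableSet_Icc
        (fun x (_ : x ∈ Icc (0:ℝ) 1) => ?_)
      have hx : SF k x - Sf k x = (εj (ψ₁ k))⁻¹ •
          ∫ u in x..(x + εj (ψ₁ k)), (fnb (φ₀ (ψ₁ k)) u - fbar u) := by
        simp only [hSFdef, hSfdef]
        rw [← smul_sub, intervalIntegral.integral_sub
          ((hfnb_int _).intervalIntegrable) (hfbar_int.intervalIntegrable)]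
      rw [hx]
    exact tendsto_of_tendsto_of_tendsto_of_le_of_le tendsto_const_nhds
      (hΛ.comp ((hφ₀m.comp hψ₁m).tendsto_atTop)) (fun k => zero_le) hbound
  obtain ⟨φ₂, hφ₂m, hφ₂⟩ : ∃ φ₂, StrictMono φ₂ ∧ ∀ i,
      ∫⁻ x in Icc (0:ℝ) 1, ‖SF (φ₂ i) x - Sf (φ₂ i) x‖₊ ∂volume < 2⁻¹ ^ i := by
    have hev : ∀ i : ℕ, ∀ᶠ k in atTop,
        (∫⁻ x in Icc (0:ℝ) 1, ‖SF k x - Sf k x‖₊ ∂volume) < 2⁻¹ ^ i := by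
      intro i
      have hpos : (0:ℝ≥0∞) < 2⁻¹ ^ i := by
        rw [pos_iff_ne_zero]
        exact ENNReal.pow_ne_zero (by simp) i
      exact hT0.eventually (eventually_lt_nhds hpos)
    exact Filter.extraction_forall_of_eventually hev
  have hterms : ∀ᵐ x ∂volume, x ∈ Icc (0:ℝ) 1 →
      Tendsto (fun i => SF (φ₂ i) x - Sf (φ₂ i) x) atTop (nhds 0) := by
    refine ae_imp_of_ae_restrict (μ := volume) (s := Icc (0:ℝ) 1) ?_
    have hmeas : ∀ i, Measurable fun x => (‖SF (φ₂ i) x - Sf (φ₂ i) x‖₊ : ℝ≥0∞) :=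
      fun i => (((hSFc _).sub (hSfc _)).measurable.nnnorm).coe_nnreal_ennreal
    have htsum : (∫⁻ x in Icc (0:ℝ) 1,
        ∑' i, (‖SF (φ₂ i) x - Sf (φ₂ i) x‖₊ : ℝ≥0∞) ∂volume) ≠ ⊤ := by
      rw [lintegral_tsum (fun i => (hmeas i).aemeasurable)]
      refine ne_of_lt (lt_of_le_of_lt
        (ENNReal.tsum_le_tsum (fun i => le_of_lt (hφ₂ i))) ?_)
      rw [ENNReal.tsum_geometric]
      rw [lt_top_iff_ne_top, Ne, ENNReal.inv_eq_top, tsub_eq_zero_iff_le]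
      intro hc
      have h12 : (2:ℝ≥0∞)⁻¹ < 1 := ENNReal.inv_lt_one.2 (by norm_num)
      exact absurd (lt_of_le_of_lt hc h12) (lt_irrefl _)
    have hae := ae_lt_top (Measurable.ennreal_tsum hmeas) htsum
    filter_upwards [hae] with x hx
    have h1 : Tendsto (fun i => (‖SF (φ₂ i) x - Sf (φ₂ i) x‖₊ : ℝ≥0∞)) atTop (nhds 0) :=
      ENNReal.tendsto_atTop_zero_of_tsum_ne_top (ne_of_lt hx)
    have h2 : Tendsto (fun i => ‖SF (φ₂ i) x - Sf (φ₂ i) x‖) atTop (nhds 0) := by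
      have h3 := (ENNReal.tendsto_toReal (by norm_num : (0:ℝ≥0∞) ≠ ⊤)).comp h1
      simpa [Function.comp_def] using h3
    exact tendsto_zero_iff_norm_tendsto_zero.2 h2
  have hbes : ∀ᵐ x ∂volume, Tendsto (fun i => Sf (φ₂ i) x) atTop (nhds (fbar x)) := by
    have hloc : LocallyIntegrable fbar volume := hfbar_int.locallyIntegrable
    filter_upwards [IsUnifLocDoublingMeasure.ae_tendsto_average_norm_sub
      (μ := volume) hloc 1] with x hx
    have hepos : ∀ i, 0 < εj (ψ₁ (φ₂ i)) := fun i => hεjpos _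
    have he0 : Tendsto (fun i => εj (ψ₁ (φ₂ i))) atTop (nhds 0) :=
      hεj0.comp ((hψ₁m.comp hφ₂m).tendsto_atTop)
    have hδ : Tendsto (fun i => εj (ψ₁ (φ₂ i)) / 2) atTop (nhdsWithin 0 (Ioi 0)) := by
      rw [tendsto_nhdsWithin_iff]
      constructor
      · simpa using he0.div_const 2
      · exact Eventually.of_forall fun i => by
          simp only [mem_Ioi]
          exact div_pos (hεjpos _) two_pos
    have hmb : ∀ᶠ i in atTop, x ∈ Metric.closedBall (x + εj (ψ₁ (φ₂ i)) / 2)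
        (1 * (εj (ψ₁ (φ₂ i)) / 2)) := by
      refine Eventually.of_forall fun i => ?_
      rw [Metric.mem_closedBall, Real.dist_eq, one_mul]
      rw [show x - (x + εj (ψ₁ (φ₂ i)) / 2) = -(εj (ψ₁ (φ₂ i)) / 2) by ring, abs_neg,
        abs_of_pos (div_pos (hεjpos _) two_pos)]
    have hx2 := hx (fun i => x + εj (ψ₁ (φ₂ i)) / 2) (fun i => εj (ψ₁ (φ₂ i)) / 2) hδ hmb
    have hkey : ∀ i, ‖Sf (φ₂ i) x - fbar x‖
        ≤ ⨍ y in Metric.closedBall (x + εj (ψ₁ (φ₂ i)) / 2) (εj (ψ₁ (φ₂ i)) / 2),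
            ‖fbar y - fbar x‖ ∂volume := by
      intro i
      have hcb : Metric.closedBall (x + εj (ψ₁ (φ₂ i)) / 2) (εj (ψ₁ (φ₂ i)) / 2)
          = Icc x (x + εj (ψ₁ (φ₂ i))) := by
        rw [Real.closedBall_eq_Icc]
        congr 1 <;> ring
      have hvol : (volume (Icc x (x + εj (ψ₁ (φ₂ i))))).toReal = εj (ψ₁ (φ₂ i)) := by
        rw [Real.volume_Icc, ENNReal.toReal_ofReal (by linarith [hepos i])]
        ring
      have h1 : Sf (φ₂ i) x - fbar x = (εj (ψ₁ (φ₂ i)))⁻¹ •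
          ∫ y in x..(x + εj (ψ₁ (φ₂ i))), (fbar y - fbar x) := by
        simp only [hSfdef]
        rw [intervalIntegral.integral_sub hfbar_int.intervalIntegrable
          intervalIntegrable_const, intervalIntegral.integral_const]
        rw [smul_sub, add_sub_cancel_left, smul_smul,
          inv_mul_cancel₀ (ne_of_gt (hepos i)), one_smul]
      rw [setAverage_eq, hcb, measureReal_def, hvol, h1, norm_smul, Real.norm_eq_abs,
        abs_of_pos (inv_pos.2 (hepos i)), smul_eq_mul]
      refine mul_le_mul_of_nonneg_left ?_ (le_of_lt (inv_pos.2 (hepos i)))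
      refine le_trans (intervalIntegral.norm_integral_le_integral_norm
        (by linarith [hepos i])) ?_
      rw [intervalIntegral.integral_of_le (by linarith [hepos i])]
      refine setIntegral_mono_set ?_ ?_ ?_
      · have hio : IntegrableOn (fun y => fbar y - fbar x)
            (Icc x (x + εj (ψ₁ (φ₂ i)))) volume :=
          (hfbar_int.integrableOn).sub (integrableOn_const (by
            rw [Real.volume_Icc]; exact ENNReal.ofReal_ne_top))
        exact hio.norm
      · exact Eventually.of_forall fun y => norm_nonneg _
      · exact Eventually.of_forall Ioc_subset_Icc_self
    have hn : Tendsto (fun i => ‖Sf (φ₂ i) x - fbar x‖) atTop (nhds 0) :=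
      squeeze_zero (fun i => norm_nonneg _) hkey hx2
    exact tendsto_iff_norm_sub_tendsto_zero.2 hn
  have hmain : ∀ᵐ x ∂volume, x ∈ Ioo (0:ℝ) 1 →
      Tendsto (fun i => SF (φ₂ i) x) atTop (nhds (f x)) := by
    filter_upwards [hterms, hbes, hae_fb] with x h1 h2 h3 hx
    have hIcc : x ∈ Icc (0:ℝ) 1 := ⟨le_of_lt hx.1, le_of_lt hx.2⟩
    have h4 := (h1 hIcc).add h2
    simp only [sub_add_cancel, zero_add] at h4
    rwa [h3 hIcc] at h4
  obtain ⟨x₀, hx₀Ioo, hx₀T⟩ : ∃ x₀, x₀ ∈ Ioo (0:ℝ) 1 ∧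
      Tendsto (fun i => SF (φ₂ i) x₀) atTop (nhds (f x₀)) := by
    by_contra hcon
    push_neg at hcon
    have hnm : ∀ᵐ x : ℝ ∂volume, x ∉ Ioo (0:ℝ) 1 := by
      filter_upwards [hmain] with x hx
      intro hxI
      exact hcon x hxI (hx hxI)
    have h0 := measure_eq_zero_iff_ae_notMem.2 hnm
    rw [Real.volume_Ioo] at h0
    norm_num at h0
  have hΦeq : ∀ x ∈ Ioo (0:ℝ) 1, ∀ᶠ i in atTop,
      SF (φ₂ i) x = SF (φ₂ i) 0 + ∫ u in (0:ℝ)..x, gk (ψ₁ (φ₂ i)) u := by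
    intro x hx
    have he0 : Tendsto (fun i => εj (ψ₁ (φ₂ i))) atTop (nhds 0) :=
      hεj0.comp ((hψ₁m.comp hφ₂m).tendsto_atTop)
    have hev : ∀ᶠ i in atTop, εj (ψ₁ (φ₂ i)) < 1 - x :=
      he0.eventually (eventually_lt_nhds (by linarith [hx.2]))
    filter_upwards [hev] with i hei
    have heN : 0 < εj (ψ₁ (φ₂ i)) := hεjpos _
    have hxe : x ≤ 1 - εj (ψ₁ (φ₂ i)) := by linarith
    have hIIb : ∀ a b : ℝ, IntervalIntegrable (fnb (φ₀ (ψ₁ (φ₂ i)))) volume a b :=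
      fun a b => (hfnb_int _).intervalIntegrable
    have hintshift : Integrable
        (fun u => fnb (φ₀ (ψ₁ (φ₂ i))) (u + εj (ψ₁ (φ₂ i)))) volume :=
      ((measurePreserving_add_right volume (εj (ψ₁ (φ₂ i)))).integrable_comp
        (hfnb_sm _).aestronglyMeasurable).2 (hfnb_int _)
    have hIIs : ∀ a b : ℝ, IntervalIntegrable
        (fun u => fnb (φ₀ (ψ₁ (φ₂ i))) (u + εj (ψ₁ (φ₂ i)))) volume a b :=
      fun a b => hintshift.intervalIntegrable
    have hgkeq : ∫ u in (0:ℝ)..x, gk (ψ₁ (φ₂ i)) u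
        = (εj (ψ₁ (φ₂ i)))⁻¹ •
          ((∫ u in (0:ℝ)..x, fnb (φ₀ (ψ₁ (φ₂ i))) (u + εj (ψ₁ (φ₂ i))))
            - ∫ u in (0:ℝ)..x, fnb (φ₀ (ψ₁ (φ₂ i))) u) := by
      rw [← intervalIntegral.integral_sub (hIIs 0 x) (hIIb 0 x),
        ← intervalIntegral.integral_smul]
      refine intervalIntegral.integral_congr fun u hu => ?_
      rw [uIcc_of_le (le_of_lt hx.1)] at hu
      have hmem : u ∈ Icc (0:ℝ) (1 - εj (ψ₁ (φ₂ i))) := ⟨hu.1, le_trans hu.2 hxe⟩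
      simp only [hgkdef]
      rw [if_pos hmem]
    have hshift : (∫ u in (0:ℝ)..x, fnb (φ₀ (ψ₁ (φ₂ i))) (u + εj (ψ₁ (φ₂ i))))
        = ∫ u in (εj (ψ₁ (φ₂ i)))..(x + εj (ψ₁ (φ₂ i))), fnb (φ₀ (ψ₁ (φ₂ i))) u := by
      have h := intervalIntegral.integral_comp_add_right (a := 0) (b := x)
        (fnb (φ₀ (ψ₁ (φ₂ i)))) (εj (ψ₁ (φ₂ i)))
      rw [zero_add] at h
      exact h
    have hadj1 : (∫ u in (0:ℝ)..(εj (ψ₁ (φ₂ i))), fnb (φ₀ (ψ₁ (φ₂ i))) u)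
        + ∫ u in (εj (ψ₁ (φ₂ i)))..(x + εj (ψ₁ (φ₂ i))), fnb (φ₀ (ψ₁ (φ₂ i))) u
        = ∫ u in (0:ℝ)..(x + εj (ψ₁ (φ₂ i))), fnb (φ₀ (ψ₁ (φ₂ i))) u :=
      intervalIntegral.integral_add_adjacent_intervals (hIIb _ _) (hIIb _ _)
    have hadj2 : (∫ u in (0:ℝ)..x, fnb (φ₀ (ψ₁ (φ₂ i))) u)
        + ∫ u in x..(x + εj (ψ₁ (φ₂ i))), fnb (φ₀ (ψ₁ (φ₂ i))) u
        = ∫ u in (0:ℝ)..(x + εj (ψ₁ (φ₂ i))), fnb (φ₀ (ψ₁ (φ₂ i))) u :=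
      intervalIntegral.integral_add_adjacent_intervals (hIIb _ _) (hIIb _ _)
    have hsub : SF (φ₂ i) x - SF (φ₂ i) 0 = ∫ u in (0:ℝ)..x, gk (ψ₁ (φ₂ i)) u := by
      simp only [hSFdef]
      rw [hgkeq, hshift, ← smul_sub, zero_add]
      congr 1
      have h5 := hadj1.trans hadj2.symm
      calc (∫ u in x..(x + εj (ψ₁ (φ₂ i))), fnb (φ₀ (ψ₁ (φ₂ i))) u)
            - ∫ u in (0:ℝ)..(εj (ψ₁ (φ₂ i))), fnb (φ₀ (ψ₁ (φ₂ i))) u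
          = ((∫ u in (0:ℝ)..x, fnb (φ₀ (ψ₁ (φ₂ i))) u)
              + ∫ u in x..(x + εj (ψ₁ (φ₂ i))), fnb (φ₀ (ψ₁ (φ₂ i))) u)
            - ((∫ u in (0:ℝ)..(εj (ψ₁ (φ₂ i))), fnb (φ₀ (ψ₁ (φ₂ i))) u)
              + ∫ u in (0:ℝ)..x, fnb (φ₀ (ψ₁ (φ₂ i))) u) := by abel
        _ = ((∫ u in (0:ℝ)..(εj (ψ₁ (φ₂ i))), fnb (φ₀ (ψ₁ (φ₂ i))) u)
              + ∫ u in (εj (ψ₁ (φ₂ i)))..(x + εj (ψ₁ (φ₂ i))), fnb (φ₀ (ψ₁ (φ₂ i))) u)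
            - ((∫ u in (0:ℝ)..(εj (ψ₁ (φ₂ i))), fnb (φ₀ (ψ₁ (φ₂ i))) u)
              + ∫ u in (0:ℝ)..x, fnb (φ₀ (ψ₁ (φ₂ i))) u) := by rw [h5]
        _ = (∫ u in (εj (ψ₁ (φ₂ i)))..(x + εj (ψ₁ (φ₂ i))), fnb (φ₀ (ψ₁ (φ₂ i))) u)
            - ∫ u in (0:ℝ)..x, fnb (φ₀ (ψ₁ (φ₂ i))) u := by abel
    exact (sub_eq_iff_eq_add'.1 hsub)
  have hA2' : ∀ x ∈ Ioo (0:ℝ) 1, Tendsto (fun i => ∫ u in (0:ℝ)..x, gk (ψ₁ (φ₂ i)) u)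
      atTop (nhds (∫ u in (0:ℝ)..x, g' u)) := by
    intro x hx
    exact (hA2 0 x le_rfl (le_of_lt hx.1) (le_of_lt hx.2)).comp hφ₂m.tendsto_atTop
  have hSF0 : Tendsto (fun i => SF (φ₂ i) 0) atTop
      (nhds (f x₀ - ∫ u in (0:ℝ)..x₀, g' u)) := by
    have h1 := hx₀T.sub (hA2' x₀ hx₀Ioo)
    refine Tendsto.congr' ?_ h1
    filter_upwards [hΦeq x₀ hx₀Ioo] with i hi
    rw [hi]
    abel
  set c : EuclideanSpace ℝ (Fin κ) := f x₀ - ∫ u in (0:ℝ)..x₀, g' u with hcdef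
  set F : ℝ → EuclideanSpace ℝ (Fin κ) := fun x => c + ∫ u in (0:ℝ)..x, g' u with hFdef
  have hfF : ∀ᵐ t ∂volume, t ∈ Icc (0:ℝ) 1 → f t = F t := by
    have h01 : ∀ᵐ x : ℝ ∂volume, x ∉ ({0, 1} : Set ℝ) := by
      refine measure_eq_zero_iff_ae_notMem.1 ?_
      exact Set.Finite.measure_zero ((Set.finite_singleton 1).insert 0) volume
    filter_upwards [hmain, h01] with x hx hx01 hIcc
    have hIoo : x ∈ Ioo (0:ℝ) 1 := by
      refine ⟨lt_of_le_of_ne hIcc.1 ?_, lt_of_le_of_ne hIcc.2 ?_⟩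
      · intro hc
        exact hx01 (by rw [← hc]; exact mem_insert _ _)
      · intro hc
        exact hx01 (by rw [hc]; exact mem_insert_of_mem _ rfl)
    have hT1 := hx hIoo
    have hT2 : Tendsto (fun i => SF (φ₂ i) x) atTop (nhds (F x)) := by
      have h2 := hSF0.add (hA2' x hIoo)
      have h3 : Tendsto (fun i => SF (φ₂ i) x) atTop
          (nhds ((f x₀ - ∫ u in (0:ℝ)..x₀, g' u) + ∫ u in (0:ℝ)..x, g' u)) := by
        refine Tendsto.congr' ?_ h2
        filter_upwards [hΦeq x hIoo] with i hi
        exact hi.symm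
      exact h3
    exact tendsto_nhds_unique hT1 hT2
  have hFTC : ∀ s ∈ Icc (0:ℝ) 1, ∀ t ∈ Icc (0:ℝ) 1, F t - F s = ∫ u in s..t, g' u := by
    intro s hs t ht
    have h1 : F t - F s = (∫ u in (0:ℝ)..t, g' u) - ∫ u in (0:ℝ)..s, g' u := by
      simp only [hFdef]
      abel
    rw [h1]
    exact intervalIntegral.integral_interval_sub_left
      (hii 0 t (left_mem_Icc.2 zero_le_one) ht)
      (hii 0 s (left_mem_Icc.2 zero_le_one) hs)
  have hfinal : (∫ t in (0:ℝ)..1, ‖g' t‖^2) ≤ L := by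
    have h2 : (∫ t in (0:ℝ)..1, ‖g' t‖^2) = ‖G‖^2 := by
      have h3 := toLp_norm_sq (⇑G) (Lp.memLp G)
      rw [Lp.toLp_coeFn] at h3
      exact h3.symm
    have hGG := hweak G
    have hub : ∀ k, (inner ℝ (Gj (ψ₁ k)) G : ℝ)
        ≤ Real.sqrt (D (φ₀ (ψ₁ k))) * ‖G‖ := by
      intro k
      refine le_trans (real_inner_le_norm _ _) ?_
      have h4 : ‖Gj (ψ₁ k)‖ = Real.sqrt (D (φ₀ (ψ₁ k))) := by
        rw [← hGnorm, Real.sqrt_sq (norm_nonneg _)]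
      rw [h4]
    have hDψ : Tendsto (fun k => D (φ₀ (ψ₁ k))) atTop (nhds L) :=
      hDφ.comp hψ₁m.tendsto_atTop
    have hsqt : Tendsto (fun k => Real.sqrt (D (φ₀ (ψ₁ k))) * ‖G‖) atTop
        (nhds (Real.sqrt L * ‖G‖)) :=
      ((Real.continuous_sqrt.tendsto L).comp hDψ).mul_const _
    have hineq : (inner ℝ G G : ℝ) ≤ Real.sqrt L * ‖G‖ :=
      le_of_tendsto_of_tendsto' hGG hsqt hub
    rw [real_inner_self_eq_norm_sq] at hineq
    have hL' : ‖G‖^2 ≤ L := by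
      nlinarith [norm_nonneg G, Real.sq_sqrt hL0, Real.sqrt_nonneg L,
        sq_nonneg (‖G‖ - Real.sqrt L)]
    rw [h2]
    exact hL'
  exact ⟨F, g', hfF, hg'mem, hFTC, hfinal⟩
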